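/- arXiv:1912.06121 — 5 statements merged into one kernel-verified Lean document; each statement's English description precedes it below -/
import Mathlib

section
/- Let (P_t)_{t≥0} be a Markov transition function on a Polish space E and B ⊆ E a subset. Suppose there exist ε > 0 and a function R : [0,∞) → [0,∞) with R(t) → 0 as t → ∞ such that for all x, y ∈ B and all t ≥ 0 there exist E-valued random variables Y, Z on a common probability space with (i) Law(Y) = P_t(y, ·), d_TV(Law(Z), P_t(x, ·)) ≤ 1 − ε, and (ii) E[d(Y, Z)] ≤ R(t). Then for every δ > 0 there exists T ≥ 0 such that for all t ≥ T and all x, y ∈ B, there exists a coupling Γ of P_t(x,·) and P_t(y,·) with Γ({(x′, y′) : d(x′, y′) ≤ δ}) ≥ ε/2. -/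
open MeasureTheory Metric Filter
open scoped NNReal ENNReal

theorem generalized_coupling_implies_local_weak_irreducibility
    {E : Type} [MetricSpace E] [CompleteSpace E] [TopologicalSpace.SeparableSpace E]
    [MeasurableSpace E] [BorelSpace E]
    (P : ℝ → E → Measure E) (hP : ∀ t x, IsProbabilityMeasure (P t x))
    (B : Set E) (ε : ℝ) (hε : 0 < ε)
    (R : ℝ → ℝ) (hR : Tendsto R atTop (nhds 0))
    (hcoup : ∀ x ∈ B, ∀ y ∈ B, ∀ t : ℝ, 0 ≤ t →
      ∃ (Ω : Type) (_ : MeasurableSpace Ω) (Pr : Measure Ω) (Y Z : Ω → E),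
        IsProbabilityMeasure Pr ∧ Measurable Y ∧ Measurable Z ∧
        Pr.map Y = P t y ∧
        (∀ A : Set E, MeasurableSet A →
          |((Pr.map Z) A).toReal - ((P t x) A).toReal| ≤ 1 - ε) ∧
        ∫⁻ ω, edist (Y ω) (Z ω) ∂Pr ≤ ENNReal.ofReal (R t)) :
    ∀ δ > (0 : ℝ), ∃ T : ℝ, 0 ≤ T ∧ ∀ t ≥ T, ∀ x ∈ B, ∀ y ∈ B,
      ∃ Γ : Measure (E × E), IsProbabilityMeasure Γ ∧
        Γ.fst = P t x ∧ Γ.snd = P t y ∧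
        ENNReal.ofReal (ε / 2) ≤ Γ {p : E × E | dist p.1 p.2 ≤ δ} := by
  intro δ hδ
  have hεδ : (0:ℝ) < ε * δ / 2 := by positivity
  obtain ⟨T₀, hT₀⟩ := (eventually_atTop).1 (hR.eventually (gt_mem_nhds hεδ))
  refine ⟨max T₀ 0, le_max_right _ _, fun t ht x hx y hy => ?_⟩
  have ht0 : (0:ℝ) ≤ t := le_trans (le_max_right _ _) ht
  have hRt : R t < ε * δ / 2 := hT₀ t (le_trans (le_max_left _ _) ht)
  obtain ⟨Ω, mΩ, Pr, Y, Z, hPrI, hY, hZ, hYlaw, hZtv, hdist⟩ := hcoup x hx y hy t ht0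
  haveI := hPrI
  haveI := hP t x
  haveI := hP t y
  set μ : Measure E := P t x with hμdef
  set ν : Measure E := P t y with hνdef
  set lam : Measure E := Pr.map Z with hlamdef
  haveI : IsProbabilityMeasure lam := Measure.isProbabilityMeasure_map hZ.aemeasurable
  have hε1 : ε ≤ 1 := by
    have := hZtv ∅ MeasurableSet.empty
    simp at this
    linarith
  set π : Measure (E × E) := Pr.map (fun ω => (Z ω, Y ω)) with hπdef
  haveI : IsProbabilityMeasure π :=
    Measure.isProbabilityMeasure_map (hZ.prodMk hY).aemeasurable
  have hπfst : π.fst = lam := Measure.fst_map_prodMk hY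
  have hπsnd : π.snd = ν := by rw [hπdef, Measure.snd_map_prodMk hZ, hYlaw]
  obtain ⟨s, hs, hsle, hcle⟩ := hahn_decomposition (μ := μ) (ν := lam)
  set m : Measure E := lam.restrict s + μ.restrict sᶜ with hmdef
  haveI : IsFiniteMeasure m := by infer_instance
  have hmlam : m ≤ lam := by
    refine Measure.le_iff.2 fun A hA => ?_
    have h1 : μ (A ∩ sᶜ) ≤ lam (A ∩ sᶜ) :=
      hcle _ (hA.inter hs.compl) Set.inter_subset_right
    calc m A = lam (A ∩ s) + μ (A ∩ sᶜ) := by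
          rw [hmdef, Measure.add_apply, Measure.restrict_apply hA, Measure.restrict_apply hA]
      _ ≤ lam (A ∩ s) + lam (A ∩ sᶜ) := add_le_add_right h1 _
      _ = lam A := by rw [← Set.diff_eq, measure_inter_add_diff A hs]
  have hmμ : m ≤ μ := by
    refine Measure.le_iff.2 fun A hA => ?_
    have h1 : lam (A ∩ s) ≤ μ (A ∩ s) :=
      hsle _ (hA.inter hs) Set.inter_subset_right
    calc m A = lam (A ∩ s) + μ (A ∩ sᶜ) := by
          rw [hmdef, Measure.add_apply, Measure.restrict_apply hA, Measure.restrict_apply hA]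
      _ ≤ μ (A ∩ s) + μ (A ∩ sᶜ) := add_le_add_left h1 _
      _ = μ A := by rw [← Set.diff_eq, measure_inter_add_diff A hs]
  have hm_univ_eq : m Set.univ = lam s + μ sᶜ := by
    rw [hmdef, Measure.add_apply, Measure.restrict_apply MeasurableSet.univ,
      Measure.restrict_apply MeasurableSet.univ, Set.univ_inter, Set.univ_inter]
  have hm_le_one : m Set.univ ≤ 1 := by
    have h := Measure.le_iff'.1 hmlam Set.univ
    rwa [show lam Set.univ = 1 from measure_univ] at h
  have hεm : ε ≤ (m Set.univ).toReal := by
    have htv := hZtv s hs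
    have hμs : (μ sᶜ).toReal = 1 - (μ s).toReal := by
      rw [measure_compl hs (measure_ne_top μ s), measure_univ,
        ENNReal.toReal_sub_of_le prob_le_one (by simp)]
      simp
    have h1 : (m Set.univ).toReal = (lam s).toReal + (μ sᶜ).toReal := by
      rw [hm_univ_eq, ENNReal.toReal_add (measure_ne_top _ _) (measure_ne_top _ _)]
    rw [h1, hμs]
    have habs := abs_le.1 htv
    linarith [habs.1]
  -- disintegration of π
  haveI : Nonempty E := ⟨x⟩
  set κ := π.condKernel with hκdef
  have hπeq : lam.compProd κ = π := by
    rw [hκdef, ← hπfst]; exact π.disintegrate π.condKernel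
  set Γ₁ : Measure (E × E) := m.compProd κ with hΓ₁def
  haveI : IsFiniteMeasure Γ₁ := by rw [hΓ₁def]; infer_instance
  have hΓ₁fst : Γ₁.fst = m := Measure.fst_compProd m κ
  have hlamsplit : lam = (lam - m) + m := (Measure.sub_add_cancel_of_le hmlam).symm
  have hπsplit : π = (lam - m).compProd κ + Γ₁ := by
    rw [← hπeq, hΓ₁def]
    nth_rewrite 1 [hlamsplit]
    exact Measure.compProd_add_left _ _ κ
  have hΓ₁le : Γ₁ ≤ π := by rw [hπsplit]; exact Measure.le_add_left le_rfl
  have hΓ₁snd_le : Γ₁.snd ≤ ν := by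
    rw [← hπsnd]
    exact Measure.map_mono hΓ₁le measurable_snd
  have hΓ₁univ : Γ₁ Set.univ = m Set.univ := by
    rw [← hΓ₁fst, Measure.fst_apply MeasurableSet.univ, Set.preimage_univ]
  have hΓ₁snd_univ : Γ₁.snd Set.univ = m Set.univ := by
    rw [Measure.snd_apply MeasurableSet.univ, Set.preimage_univ, hΓ₁univ]
  set D : Set (E × E) := {p : E × E | dist p.1 p.2 ≤ δ} with hDdef
  have hDclosed : IsClosed D := isClosed_le continuous_dist continuous_const
  have hD : MeasurableSet D := hDclosed.measurableSet
  -- Markov inequality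
  have hπDc : π Dᶜ ≤ ENNReal.ofReal (ε / 2) := by
    have hmap : π Dᶜ = Pr {ω | ¬ dist (Z ω) (Y ω) ≤ δ} := by
      rw [hπdef, Measure.map_apply (hZ.prodMk hY) hD.compl]
      rfl
    have hsub : {ω | ¬ dist (Z ω) (Y ω) ≤ δ} ⊆
        {ω | ENNReal.ofReal δ ≤ edist (Y ω) (Z ω)} := by
      intro ω hω
      simp only [Set.mem_setOf_eq, not_le] at hω ⊢
      rw [edist_dist, dist_comm]
      exact ENNReal.ofReal_le_ofReal hω.le
    have hmarkov : ENNReal.ofReal δ * Pr {ω | ENNReal.ofReal δ ≤ edist (Y ω) (Z ω)}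
        ≤ ∫⁻ ω, edist (Y ω) (Z ω) ∂Pr :=
      mul_meas_ge_le_lintegral₀ (hY.edist hZ).aemeasurable _
    have hδ0 : ENNReal.ofReal δ ≠ 0 := by
      simp only [ne_eq, ENNReal.ofReal_eq_zero, not_le]
      exact hδ
    have hδtop : ENNReal.ofReal δ ≠ ∞ := ENNReal.ofReal_ne_top
    have h2 : Pr {ω | ENNReal.ofReal δ ≤ edist (Y ω) (Z ω)} ≤ ENNReal.ofReal (ε / 2) := by
      have h1 : Pr {ω | ENNReal.ofReal δ ≤ edist (Y ω) (Z ω)} ≤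
          (∫⁻ ω, edist (Y ω) (Z ω) ∂Pr) / ENNReal.ofReal δ :=
        (ENNReal.le_div_iff_mul_le (Or.inl hδ0) (Or.inl hδtop)).2 (by rwa [mul_comm])
      refine h1.trans ?_
      rw [ENNReal.div_le_iff hδ0 hδtop]
      refine hdist.trans ?_
      rw [← ENNReal.ofReal_mul (by positivity)]
      exact ENNReal.ofReal_le_ofReal (by nlinarith)
    calc π Dᶜ = Pr {ω | ¬ dist (Z ω) (Y ω) ≤ δ} := hmap
      _ ≤ Pr {ω | ENNReal.ofReal δ ≤ edist (Y ω) (Z ω)} := measure_mono hsub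
      _ ≤ ENNReal.ofReal (ε / 2) := h2
  have hπD : (1:ℝ≥0∞) ≤ π D + ENNReal.ofReal (ε / 2) := by
    have h := measure_add_measure_compl (μ := π) hD
    rw [measure_univ] at h
    calc (1:ℝ≥0∞) = π D + π Dᶜ := h.symm
      _ ≤ π D + ENNReal.ofReal (ε / 2) := add_le_add_right hπDc _
  have hrest_univ : ((lam - m).compProd κ) Set.univ = lam Set.univ - m Set.univ := by
    have h1 : ((lam - m).compProd κ).fst Set.univ = (lam - m) Set.univ := by
      rw [Measure.fst_compProd]
    rw [Measure.fst_apply MeasurableSet.univ, Set.preimage_univ] at h1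
    rw [h1, Measure.sub_apply MeasurableSet.univ hmlam]
  have hπDle : π D ≤ ((lam - m).compProd κ) D + Γ₁ D := by
    rw [hπsplit]; exact le_of_eq (Measure.add_apply _ _ _)
  -- real-number bookkeeping to get  ε/2 ≤ (Γ₁ D).toReal
  have hrest_real : (((lam - m).compProd κ) Set.univ).toReal = 1 - (m Set.univ).toReal := by
    rw [hrest_univ, measure_univ, ENNReal.toReal_sub_of_le hm_le_one (by simp)]
    simp
  have hrest_ne : ((lam - m).compProd κ) Set.univ ≠ ∞ := by
    rw [hrest_univ]
    exact (tsub_le_self.trans_lt (by rw [measure_univ]; exact ENNReal.one_lt_top)).ne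
  have hπD_real : (1:ℝ) ≤ (π D).toReal + ε / 2 := by
    have h := ENNReal.toReal_mono (by
        exact ENNReal.add_ne_top.2 ⟨measure_ne_top _ _, ENNReal.ofReal_ne_top⟩) hπD
    rwa [ENNReal.toReal_one, ENNReal.toReal_add (measure_ne_top _ _) ENNReal.ofReal_ne_top,
      ENNReal.toReal_ofReal (by positivity)] at h
  have hπDle_real : (π D).toReal ≤ (((lam - m).compProd κ) D).toReal + (Γ₁ D).toReal := by
    have h := ENNReal.toReal_mono (by
        exact ENNReal.add_ne_top.2 ⟨measure_ne_top _ _, measure_ne_top _ _⟩) hπDle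
    rwa [ENNReal.toReal_add (measure_ne_top _ _) (measure_ne_top _ _)] at h
  have hrestD_real : (((lam - m).compProd κ) D).toReal ≤ 1 - (m Set.univ).toReal := by
    rw [← hrest_real]
    exact ENNReal.toReal_mono hrest_ne (measure_mono (Set.subset_univ D))
  have hΓ₁D_real : ε / 2 ≤ (Γ₁ D).toReal := by linarith
  have hΓ₁D : ENNReal.ofReal (ε / 2) ≤ Γ₁ D :=
    ENNReal.ofReal_le_of_le_toReal hΓ₁D_real
  -- residual measures
  set μ₁ : Measure E := μ - m with hμ₁def
  set ν₁ : Measure E := ν - Γ₁.snd with hν₁def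
  haveI : IsFiniteMeasure μ₁ := by rw [hμ₁def]; infer_instance
  haveI : IsFiniteMeasure ν₁ := by rw [hν₁def]; infer_instance
  have hμ₁univ : μ₁ Set.univ = 1 - m Set.univ := by
    rw [hμ₁def, Measure.sub_apply MeasurableSet.univ hmμ, measure_univ]
  have hν₁univ : ν₁ Set.univ = 1 - m Set.univ := by
    rw [hν₁def, Measure.sub_apply MeasurableSet.univ hΓ₁snd_le, measure_univ, hΓ₁snd_univ]
  have hμadd : m + μ₁ = μ := by
    rw [hμ₁def, add_comm]; exact Measure.sub_add_cancel_of_le hmμ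
  have hνadd : Γ₁.snd + ν₁ = ν := by
    rw [hν₁def, add_comm]; exact Measure.sub_add_cancel_of_le hΓ₁snd_le
  by_cases hc : m Set.univ = 1
  · -- no residual: Γ₁ is a coupling
    have hμ₁0 : μ₁ = 0 := by
      have : μ₁ Set.univ = 0 := by rw [hμ₁univ, hc, tsub_self]
      exact Measure.measure_univ_eq_zero.1 this
    have hν₁0 : ν₁ = 0 := by
      have : ν₁ Set.univ = 0 := by rw [hν₁univ, hc, tsub_self]
      exact Measure.measure_univ_eq_zero.1 this
    refine ⟨Γ₁, ⟨by rw [hΓ₁univ, hc]⟩, ?_, ?_, hΓ₁D⟩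
    · rw [hΓ₁fst, ← hμadd, hμ₁0, add_zero]
    · rw [← hνadd, hν₁0, add_zero]
  · -- normalize the residuals
    have hcne : μ₁ Set.univ ≠ 0 := by
      rw [hμ₁univ]
      intro h
      exact hc (le_antisymm hm_le_one (tsub_eq_zero_iff_le.1 h))
    have hctop : μ₁ Set.univ ≠ ∞ := measure_ne_top _ _
    set μ₂ : Measure E := (μ₁ Set.univ)⁻¹ • μ₁ with hμ₂def
    haveI : IsProbabilityMeasure μ₂ := by
      constructor
      rw [hμ₂def, Measure.smul_apply, smul_eq_mul, ENNReal.inv_mul_cancel hcne hctop]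
    set Γ₂ : Measure (E × E) := μ₂.prod ν₁ with hΓ₂def
    have hΓ₂snd : Γ₂.snd = ν₁ := Measure.snd_prod
    have hΓ₂fst : Γ₂.fst = μ₁ := by
      ext A hA
      rw [Measure.fst_apply hA, hΓ₂def]
      have : Prod.fst ⁻¹' A = A ×ˢ (Set.univ : Set E) := by
        ext p; simp [Set.mem_prod]
      rw [this, Measure.prod_prod, hν₁univ, ← hμ₁univ, hμ₂def, Measure.smul_apply,
        smul_eq_mul, mul_comm, ← mul_assoc, ENNReal.mul_inv_cancel hcne hctop, one_mul]
    refine ⟨Γ₁ + Γ₂, ?_, ?_, ?_, ?_⟩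
    · constructor
      rw [Measure.add_apply, hΓ₁univ]
      have hΓ₂univ : Γ₂ Set.univ = μ₁ Set.univ := by
        rw [← hΓ₂fst, Measure.fst_apply MeasurableSet.univ, Set.preimage_univ]
      rw [hΓ₂univ, hμ₁univ, add_tsub_cancel_of_le hm_le_one]
    · rw [Measure.fst_add, hΓ₁fst, hΓ₂fst, hμadd]
    · rw [Measure.snd_add, hΓ₂snd, hνadd]
    · calc ENNReal.ofReal (ε / 2) ≤ Γ₁ D := hΓ₁D
        _ ≤ (Γ₁ + Γ₂) D := by rw [Measure.add_apply]; exact le_self_add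
end

section
/- Let (Z, Y) be E-valued random variables on a probability space with E[d(Z, Y)] ≤ R for some R ≥ 0, and let δ > 0 satisfy R/δ < ε/2 for some ε ∈ (0,1). Suppose also there exist random variables (X′, Z′) on another probability space with P(X′ = Z′) ≥ ε and Law(Z′) = Law(Z). Then there exist random variables (V¹, V², V³) on a common probability space with (V¹,V²) distributed as (X′,Z′) and (V²,V³) distributed as (Z,Y), and P(d(V¹, V³) ≤ δ) ≥ ε/2. -/
open MeasureTheory Metric ProbabilityTheory
open scoped ENNReal

lemma map_compProd_prod_left {α β γ : Type*} [MeasurableSpace α] [MeasurableSpace β]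
    [MeasurableSpace γ] (ρ : Measure α) [SFinite ρ] (κ : Kernel α β) (η : Kernel α γ)
    [IsMarkovKernel κ] [IsMarkovKernel η] :
    (ρ ⊗ₘ (κ ×ₖ η)).map (fun p => (p.1, p.2.1)) = ρ ⊗ₘ κ := by
  ext s hs
  rw [Measure.map_apply (measurable_fst.prodMk (measurable_snd.fst)) hs,
    Measure.compProd_apply ((measurable_fst.prodMk (measurable_snd.fst)) hs),
    Measure.compProd_apply hs]
  congr 1
  ext a
  have : κ a (Prod.mk a ⁻¹' s) = (Kernel.fst (κ ×ₖ η)) a (Prod.mk a ⁻¹' s) := by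
    rw [Kernel.fst_prod]
  rw [this, Kernel.fst_apply' _ _ (measurable_prodMk_left hs)]
  rfl

lemma map_compProd_prod_right {α β γ : Type*} [MeasurableSpace α] [MeasurableSpace β]
    [MeasurableSpace γ] (ρ : Measure α) [SFinite ρ] (κ : Kernel α β) (η : Kernel α γ)
    [IsMarkovKernel κ] [IsMarkovKernel η] :
    (ρ ⊗ₘ (κ ×ₖ η)).map (fun p => (p.1, p.2.2)) = ρ ⊗ₘ η := by
  ext s hs
  rw [Measure.map_apply (measurable_fst.prodMk (measurable_snd.snd)) hs,
    Measure.compProd_apply ((measurable_fst.prodMk (measurable_snd.snd)) hs),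
    Measure.compProd_apply hs]
  congr 1
  ext a
  have : η a (Prod.mk a ⁻¹' s) = (Kernel.snd (κ ×ₖ η)) a (Prod.mk a ⁻¹' s) := by
    rw [Kernel.snd_prod]
  rw [this, Kernel.snd_apply' _ _ (measurable_prodMk_left hs)]
  rfl

theorem glued_coupling_close_with_positive_probability
    {E : Type} [MetricSpace E] [CompleteSpace E] [TopologicalSpace.SeparableSpace E]
    [MeasurableSpace E] [BorelSpace E]
    {Ω Ω' : Type} [MeasurableSpace Ω] [MeasurableSpace Ω']
    (Pr : Measure Ω) (Pr' : Measure Ω')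
    [IsProbabilityMeasure Pr] [IsProbabilityMeasure Pr']
    (Z Y : Ω → E) (hZ : Measurable Z) (hY : Measurable Y)
    (X' Z' : Ω' → E) (hX' : Measurable X') (hZ' : Measurable Z')
    (R δ ε : ℝ) (hR : 0 ≤ R) (hδ : 0 < δ) (hε : ε ∈ Set.Ioo (0:ℝ) 1)
    (hEd : ∫⁻ ω, edist (Z ω) (Y ω) ∂Pr ≤ ENNReal.ofReal R)
    (hRδ : R / δ < ε / 2)
    (hmatch : ENNReal.ofReal ε ≤ Pr' {ω | X' ω = Z' ω})
    (hlaw : Pr'.map Z' = Pr.map Z) :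
    ∃ (Ω'' : Type) (_ : MeasurableSpace Ω'') (P'' : Measure Ω'') (V₁ V₂ V₃ : Ω'' → E),
      IsProbabilityMeasure P'' ∧
      Measurable V₁ ∧ Measurable V₂ ∧ Measurable V₃ ∧
      P''.map (fun ω => (V₁ ω, V₂ ω)) = Pr'.map (fun ω => (X' ω, Z' ω)) ∧
      P''.map (fun ω => (V₂ ω, V₃ ω)) = Pr.map (fun ω => (Z ω, Y ω)) ∧
      ENNReal.ofReal (ε / 2) ≤ P'' {ω | dist (V₁ ω) (V₃ ω) ≤ δ} := by
  -- E is nonempty since it carries a probability measure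
  have hΩne : Nonempty Ω := by
    by_contra h
    rw [not_nonempty_iff] at h
    have h1 : Pr Set.univ = 1 := measure_univ
    rw [Set.univ_eq_empty_iff.mpr h, measure_empty] at h1
    exact zero_ne_one h1
  have hEne : Nonempty E := ⟨Z hΩne.some⟩
  -- laws
  set μ : Measure (E × E) := Pr'.map (fun ω => (X' ω, Z' ω)) with hμ
  set ν : Measure (E × E) := Pr.map (fun ω => (Z ω, Y ω)) with hν
  have hμm : Measurable (fun ω => (X' ω, Z' ω)) := hX'.prodMk hZ'
  have hνm : Measurable (fun ω => (Z ω, Y ω)) := hZ.prodMk hY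
  have : IsProbabilityMeasure μ := Measure.isProbabilityMeasure_map hμm.aemeasurable
  have : IsProbabilityMeasure ν := Measure.isProbabilityMeasure_map hνm.aemeasurable
  set μ' : Measure (E × E) := Pr'.map (fun ω => (Z' ω, X' ω)) with hμ'
  have hμ'm : Measurable (fun ω => (Z' ω, X' ω)) := hZ'.prodMk hX'
  have : IsProbabilityMeasure μ' := Measure.isProbabilityMeasure_map hμ'm.aemeasurable
  set ρ : Measure E := Pr.map Z with hρ
  have : IsProbabilityMeasure ρ := Measure.isProbabilityMeasure_map hZ.aemeasurable
  have hνfst : ν.fst = ρ := by rw [hν, Measure.fst_map_prodMk hY, hρ]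
  have hμ'fst : μ'.fst = ρ := by rw [hμ', Measure.fst_map_prodMk hX', hlaw, hρ]
  set κ₁ : Kernel E E := μ'.condKernel with hκ₁
  set κ₂ : Kernel E E := ν.condKernel with hκ₂
  have hglue1 : ρ ⊗ₘ κ₁ = μ' := by rw [hκ₁, ← hμ'fst]; exact μ'.disintegrate μ'.condKernel
  have hglue2 : ρ ⊗ₘ κ₂ = ν := by rw [hκ₂, ← hνfst]; exact ν.disintegrate ν.condKernel
  refine ⟨E × E × E, inferInstance, ρ ⊗ₘ (κ₁ ×ₖ κ₂), fun p => p.2.1, fun p => p.1,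
    fun p => p.2.2, inferInstance, measurable_snd.fst, measurable_fst, measurable_snd.snd,
    ?_, ?_, ?_⟩
  · -- (V₁, V₂) law
    have h1 : (ρ ⊗ₘ (κ₁ ×ₖ κ₂)).map (fun p => (p.1, p.2.1)) = μ' :=
      (map_compProd_prod_left ρ κ₁ κ₂).trans hglue1
    have h2 : ((ρ ⊗ₘ (κ₁ ×ₖ κ₂)).map (fun p => (p.1, p.2.1))).map Prod.swap = μ'.map Prod.swap :=
      by rw [h1]
    rw [Measure.map_map measurable_swap (measurable_fst.prodMk measurable_snd.fst)] at h2
    rw [hμ', Measure.map_map measurable_swap hμ'm] at h2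
    have : (Prod.swap ∘ fun ω => (Z' ω, X' ω)) = fun ω => (X' ω, Z' ω) := rfl
    rw [this] at h2
    exact h2
  · -- (V₂, V₃) law
    exact (map_compProd_prod_right ρ κ₁ κ₂).trans hglue2
  · -- probability bound
    set P'' : Measure (E × E × E) := ρ ⊗ₘ (κ₁ ×ₖ κ₂) with hP''
    have hPprob : IsProbabilityMeasure P'' := inferInstance
    -- measure of the matching event
    have hA : ENNReal.ofReal ε ≤ P'' {p : E × E × E | p.2.1 = p.1} := by
      have hmap : P''.map (fun p => (p.1, p.2.1)) = μ' :=
        (map_compProd_prod_left ρ κ₁ κ₂).trans hglue1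
      have hdiag : MeasurableSet {q : E × E | q.1 = q.2} :=
        MeasureTheory.StronglyMeasurable.measurableSet_eq_fun measurable_fst.stronglyMeasurable measurable_snd.stronglyMeasurable
      have h1 : P'' {p : E × E × E | p.2.1 = p.1} = μ' {q : E × E | q.1 = q.2} := by
        rw [← hmap, Measure.map_apply (measurable_fst.prodMk measurable_snd.fst) hdiag]
        congr 1
        ext p
        simp [eq_comm]
      have h2 : μ' {q : E × E | q.1 = q.2} = Pr' {ω | X' ω = Z' ω} := by
        rw [hμ', Measure.map_apply hμ'm hdiag]
        congr 1
        ext ω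
        simp [eq_comm]
      rw [h1, h2]
      exact hmatch
    -- measure of the closeness event for (V₂, V₃)
    have hB : ENNReal.ofReal (1 - ε / 2) ≤ P'' {p : E × E × E | dist p.1 p.2.2 ≤ δ} := by
      have hmap : P''.map (fun p => (p.1, p.2.2)) = ν :=
        (map_compProd_prod_right ρ κ₁ κ₂).trans hglue2
      have hdistm : Measurable fun ω => dist (Z ω) (Y ω) := hZ.dist hY
      have hsm : MeasurableSet {q : E × E | dist q.1 q.2 ≤ δ} :=
        measurableSet_le (measurable_fst.dist measurable_snd) measurable_const
      have h1a : ν {q : E × E | dist q.1 q.2 ≤ δ} = P'' {p : E × E × E | dist p.1 p.2.2 ≤ δ} := by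
        rw [← hmap, Measure.map_apply (measurable_fst.prodMk measurable_snd.snd) hsm]
        rfl
      have h1b : ν {q : E × E | dist q.1 q.2 ≤ δ} = Pr {ω | dist (Z ω) (Y ω) ≤ δ} := by
        rw [hν, Measure.map_apply hνm hsm]
        rfl
      have h1 : P'' {p : E × E × E | dist p.1 p.2.2 ≤ δ} = Pr {ω | dist (Z ω) (Y ω) ≤ δ} :=
        h1a.symm.trans h1b
      rw [h1]
      -- Markov inequality
      have hmarkov : Pr {ω | ENNReal.ofReal δ ≤ edist (Z ω) (Y ω)} ≤ ENNReal.ofReal (R / δ) := by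
        have := mul_meas_ge_le_lintegral₀ (μ := Pr) (f := fun ω => edist (Z ω) (Y ω))
          (hZ.edist hY).aemeasurable (ENNReal.ofReal δ)
        have hδ' : ENNReal.ofReal δ ≠ 0 := by
          simp [ENNReal.ofReal_eq_zero, not_le, hδ]
        rw [ENNReal.ofReal_div_of_pos hδ]
        rw [ENNReal.le_div_iff_mul_le (Or.inl hδ') (Or.inl ENNReal.ofReal_ne_top), mul_comm]
        exact this.trans hEd
      have hcompl : Pr {ω | dist (Z ω) (Y ω) ≤ δ}ᶜ ≤ ENNReal.ofReal (R / δ) := by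
        refine le_trans (measure_mono ?_) hmarkov
        intro ω hω
        simp only [Set.mem_compl_iff, Set.mem_setOf_eq, not_le] at hω ⊢
        rw [edist_dist]
        exact ENNReal.ofReal_le_ofReal hω.le
      have hms : MeasurableSet {ω | dist (Z ω) (Y ω) ≤ δ} :=
        measurableSet_le hdistm measurable_const
      have h2 : (1 : ℝ≥0∞) - ENNReal.ofReal (R / δ) ≤ Pr {ω | dist (Z ω) (Y ω) ≤ δ} := by
        have := measure_compl hms (measure_ne_top Pr _)
        have hle : (1 : ℝ≥0∞) - Pr {ω | dist (Z ω) (Y ω) ≤ δ} ≤ ENNReal.ofReal (R / δ) := by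
          rw [← measure_univ (μ := Pr), ← this]; exact hcompl
        have h1' := tsub_le_iff_right.mp hle
        -- 1 ≤ ofReal (R/δ) + Pr {...}
        calc (1 : ℝ≥0∞) - ENNReal.ofReal (R / δ)
            ≤ (ENNReal.ofReal (R / δ) + Pr {ω | dist (Z ω) (Y ω) ≤ δ}) - ENNReal.ofReal (R / δ) :=
              tsub_le_tsub_right h1' _
          _ = Pr {ω | dist (Z ω) (Y ω) ≤ δ} := by
              rw [add_comm, ENNReal.add_sub_cancel_right ENNReal.ofReal_ne_top]
      refine le_trans ?_ h2
      have : ENNReal.ofReal (1 - ε / 2) ≤ ENNReal.ofReal (1 - R / δ) :=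
        ENNReal.ofReal_le_ofReal (by linarith)
      refine this.trans ?_
      rw [ENNReal.ofReal_sub _ (div_nonneg hR hδ.le), ENNReal.ofReal_one]
    -- combine
    have hAm : MeasurableSet {p : E × E × E | p.2.1 = p.1} :=
      MeasureTheory.StronglyMeasurable.measurableSet_eq_fun measurable_snd.fst.stronglyMeasurable measurable_fst.stronglyMeasurable
    have hBm : MeasurableSet {p : E × E × E | dist p.1 p.2.2 ≤ δ} :=
      measurableSet_le (measurable_fst.dist measurable_snd.snd) measurable_const
    have hsub : {p : E × E × E | p.2.1 = p.1} ∩ {p : E × E × E | dist p.1 p.2.2 ≤ δ}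
        ⊆ {p : E × E × E | dist p.2.1 p.2.2 ≤ δ} := by
      rintro p ⟨h1, h2⟩
      simp only [Set.mem_setOf_eq] at *
      rw [h1]; exact h2
    refine le_trans ?_ (measure_mono hsub)
    have hunion := measure_union_add_inter (μ := P'')
      {p : E × E × E | p.2.1 = p.1} hBm
    have hinter : ENNReal.ofReal ε + ENNReal.ofReal (1 - ε / 2) - 1
        ≤ P'' ({p : E × E × E | p.2.1 = p.1} ∩ {p : E × E × E | dist p.1 p.2.2 ≤ δ}) := by
      have hsum : ENNReal.ofReal ε + ENNReal.ofReal (1 - ε / 2)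
          ≤ P'' {p : E × E × E | p.2.1 = p.1} + P'' {p : E × E × E | dist p.1 p.2.2 ≤ δ} :=
        add_le_add hA hB
      rw [← hunion] at hsum
      have hle1 : P'' ({p : E × E × E | p.2.1 = p.1} ∪ {p : E × E × E | dist p.1 p.2.2 ≤ δ})
          ≤ 1 := prob_le_one
      refine tsub_le_iff_right.mpr ?_
      calc ENNReal.ofReal ε + ENNReal.ofReal (1 - ε / 2)
          ≤ P'' ({p : E × E × E | p.2.1 = p.1} ∪ {p : E × E × E | dist p.1 p.2.2 ≤ δ})
            + P'' ({p : E × E × E | p.2.1 = p.1} ∩ {p : E × E × E | dist p.1 p.2.2 ≤ δ}) := hsum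
        _ ≤ P'' ({p : E × E × E | p.2.1 = p.1} ∩ {p : E × E × E | dist p.1 p.2.2 ≤ δ}) + 1 := by
            rw [add_comm]; exact add_le_add_right hle1 _
    refine le_trans ?_ hinter
    have hεhalf : (0:ℝ) ≤ 1 - ε / 2 := by linarith [hε.2]
    rw [← ENNReal.ofReal_add hε.1.le hεhalf]
    have : ε + (1 - ε / 2) = ε / 2 + 1 := by ring
    rw [this, ENNReal.ofReal_add (by linarith [hε.1]) zero_le_one, ENNReal.ofReal_one,
      ENNReal.add_sub_cancel_right ENNReal.one_ne_top]
end

section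
/- Consider the discrete-time Markov chain on the state space E = ℕ ∪ {n + ξ/n : n ∈ ℕ} ⊆ ℝ (for fixed ξ ∈ (0, 1/2)), with transition kernel: from an integer x ∈ ℕ, the chain moves to x+1 with probability 1/2 and to 1 with probability 1/2; from a shifted point x = n + ξ/n, it moves to (n+1) + ξ/(n+1) with probability 1/2 and to 1 + ξ with probability 1/2. Then the measures μ₁ = Σ_{i≥1} 2^{-i} δ_i and μ₂ = Σ_{i≥1} 2^{-i} δ_{i + ξ/i} are both invariant probability measures for this chain, and μ₁ ≠ μ₂. -/
open MeasureTheory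
open scoped ENNReal

lemma geo_half : ∑' i : ℕ, ((1/2 : ℝ≥0∞)) ^ (i+1) = 1 := by
  simp only [pow_succ]
  rw [ENNReal.tsum_mul_right, ENNReal.tsum_geometric]
  rw [one_div, ENNReal.one_sub_inv_two, inv_inv]
  exact ENNReal.mul_inv_cancel two_ne_zero ENNReal.ofNat_ne_top

set_option maxHeartbeats 1000000 in
lemma inv_aux (atom : ℕ → ℝ) (P : ℝ → Measure ℝ)
    (hP : ∀ i : ℕ, P (atom i) = (1/2 : ℝ≥0∞) • Measure.dirac (atom 0)
          + (1/2 : ℝ≥0∞) • Measure.dirac (atom (i+1)))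
    (A : Set ℝ) (hA : MeasurableSet A) :
    Measure.sum (fun i : ℕ => ((1/2 : ℝ≥0∞) ^ (i + 1)) • Measure.dirac (atom i)) A
      = ∫⁻ x, P x A ∂ (Measure.sum (fun i : ℕ => ((1/2 : ℝ≥0∞) ^ (i + 1)) • Measure.dirac (atom i))) := by
  have hL : Measure.sum (fun i : ℕ => ((1/2 : ℝ≥0∞) ^ (i + 1)) • Measure.dirac (atom i)) A
      = ∑' i : ℕ, (1/2 : ℝ≥0∞) ^ (i+1) * (Measure.dirac (atom i)) A := by
    rw [Measure.sum_apply _ hA]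
    simp only [Measure.smul_apply, smul_eq_mul]
  have hR : ∫⁻ x, P x A ∂ (Measure.sum (fun i : ℕ => ((1/2 : ℝ≥0∞) ^ (i + 1)) • Measure.dirac (atom i)))
      = ∑' i : ℕ, (1/2 : ℝ≥0∞) ^ (i+1) *
          ((1/2 : ℝ≥0∞) * (Measure.dirac (atom 0)) A + (1/2 : ℝ≥0∞) * (Measure.dirac (atom (i+1))) A) := by
    rw [lintegral_sum_measure]
    apply tsum_congr; intro i
    rw [lintegral_smul_measure, lintegral_dirac, hP i, Measure.add_apply,
      Measure.smul_apply, Measure.smul_apply, smul_eq_mul, smul_eq_mul]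
    rfl
  refine hL.trans (Eq.trans ?_ hR.symm)
  rw [tsum_eq_zero_add' (f := fun i : ℕ => (1/2 : ℝ≥0∞) ^ (i+1) * (Measure.dirac (atom i)) A) ENNReal.summable]
  have hexp : ∀ i : ℕ, (1/2 : ℝ≥0∞) ^ (i+1) * ((1/2 : ℝ≥0∞) * (Measure.dirac (atom 0)) A
        + (1/2 : ℝ≥0∞) * (Measure.dirac (atom (i+1))) A)
      = (1/2 : ℝ≥0∞) ^ (i+1+1) * (Measure.dirac (atom 0)) A
        + (1/2 : ℝ≥0∞) ^ (i+1+1) * (Measure.dirac (atom (i+1))) A := by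
    intro i; ring
  rw [tsum_congr hexp, ENNReal.tsum_add, ENNReal.tsum_mul_right]
  have h2 : ∑' i : ℕ, ((1/2 : ℝ≥0∞)) ^ (i+1+1) = 1/2 := by
    calc ∑' i : ℕ, ((1/2 : ℝ≥0∞)) ^ (i+1+1)
        = ∑' i : ℕ, ((1/2 : ℝ≥0∞)) ^ (i+1) * (1/2) := by
          apply tsum_congr; intro i; ring
      _ = 1/2 := by rw [ENNReal.tsum_mul_right, geo_half, one_mul]
  rw [h2, pow_one]

theorem two_invariant_measures_example
    (ξ : ℝ) (hξ : ξ ∈ Set.Ioo (0:ℝ) (1/2))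
    (P : ℝ → Measure ℝ)
    (hPprob : ∀ x, IsProbabilityMeasure (P x))
    (hPint : ∀ n : ℕ, 1 ≤ n →
      P n = (1/2 : ℝ≥0∞) • Measure.dirac (1 : ℝ)
            + (1/2 : ℝ≥0∞) • Measure.dirac ((n : ℝ) + 1))
    (hPshift : ∀ n : ℕ, 1 ≤ n →
      P ((n : ℝ) + ξ / n) = (1/2 : ℝ≥0∞) • Measure.dirac (1 + ξ)
            + (1/2 : ℝ≥0∞) • Measure.dirac (((n : ℝ) + 1) + ξ / ((n : ℝ) + 1))) :
    let μ₁ : Measure ℝ :=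
      Measure.sum (fun i : ℕ => ((1/2 : ℝ≥0∞) ^ (i + 1)) • Measure.dirac ((i : ℝ) + 1));
    let μ₂ : Measure ℝ :=
      Measure.sum (fun i : ℕ =>
        ((1/2 : ℝ≥0∞) ^ (i + 1)) • Measure.dirac (((i : ℝ) + 1) + ξ / ((i : ℝ) + 1)));
    IsProbabilityMeasure μ₁ ∧ IsProbabilityMeasure μ₂ ∧
    (∀ A : Set ℝ, MeasurableSet A → μ₁ A = ∫⁻ x, P x A ∂μ₁) ∧
    (∀ A : Set ℝ, MeasurableSet A → μ₂ A = ∫⁻ x, P x A ∂μ₂) ∧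
    μ₁ ≠ μ₂ := by
  intro μ₁ μ₂
  obtain ⟨hξ0, hξh⟩ := hξ
  -- probability lemma
  have prob_aux : ∀ atom : ℕ → ℝ, IsProbabilityMeasure
      (Measure.sum fun i : ℕ => ((1/2 : ℝ≥0∞) ^ (i + 1)) • Measure.dirac (atom i)) := by
    intro atom
    constructor
    rw [Measure.sum_apply _ MeasurableSet.univ]
    simp only [Measure.smul_apply, smul_eq_mul, measure_univ, mul_one]
    exact geo_half
  have hP1 : ∀ i : ℕ, P ((fun i : ℕ => (i : ℝ) + 1) i)
      = (1/2 : ℝ≥0∞) • Measure.dirac ((fun i : ℕ => (i : ℝ) + 1) 0)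
        + (1/2 : ℝ≥0∞) • Measure.dirac ((fun i : ℕ => (i : ℝ) + 1) (i+1)) := by
    intro i
    have h := hPint (i+1) (Nat.le_add_left 1 i)
    have e1 : ((i+1 : ℕ) : ℝ) = (i : ℝ) + 1 := by push_cast; ring
    rw [e1] at h
    simp only [h]
    norm_num
  have hP2 : ∀ i : ℕ, P ((fun i : ℕ => ((i : ℝ) + 1) + ξ / ((i : ℝ) + 1)) i)
      = (1/2 : ℝ≥0∞) • Measure.dirac ((fun i : ℕ => ((i : ℝ) + 1) + ξ / ((i : ℝ) + 1)) 0)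
        + (1/2 : ℝ≥0∞) • Measure.dirac ((fun i : ℕ => ((i : ℝ) + 1) + ξ / ((i : ℝ) + 1)) (i+1)) := by
    intro i
    have h := hPshift (i+1) (Nat.le_add_left 1 i)
    have e1 : ((i+1 : ℕ) : ℝ) = (i : ℝ) + 1 := by push_cast; ring
    rw [e1] at h
    simp only [h]
    norm_num
  refine ⟨prob_aux _, prob_aux _, ?_, ?_, ?_⟩
  · intro A hA
    exact inv_aux (fun i : ℕ => (i : ℝ) + 1) P hP1 A hA
  · intro A hA
    exact inv_aux (fun i : ℕ => ((i : ℝ) + 1) + ξ / ((i : ℝ) + 1)) P hP2 A hA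
  · intro h
    have h1 : μ₁ {(1:ℝ)} = 1/2 := by
      show Measure.sum _ {(1:ℝ)} = 1/2
      rw [Measure.sum_apply _ (measurableSet_singleton 1)]
      rw [tsum_eq_single 0 ?_]
      · simp [Measure.dirac_apply]
      · intro i hi
        have hne : (i : ℝ) + 1 ≠ 1 := by
          have : (1:ℝ) ≤ (i:ℝ) := by exact_mod_cast Nat.one_le_iff_ne_zero.mpr hi
          linarith
        simp [Measure.dirac_apply, hne]
    have h2 : μ₂ {(1:ℝ)} = 0 := by
      show Measure.sum _ {(1:ℝ)} = 0
      rw [Measure.sum_apply _ (measurableSet_singleton 1)]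
      have : ∀ i : ℕ, (((1/2 : ℝ≥0∞) ^ (i + 1)) • Measure.dirac (((i : ℝ) + 1) + ξ / ((i : ℝ) + 1))) {(1:ℝ)} = 0 := by
        intro i
        have hpos : (0:ℝ) < (i:ℝ) + 1 := by positivity
        have hne : ((i : ℝ) + 1) + ξ / ((i : ℝ) + 1) ≠ 1 := by
          have h1' : (0:ℝ) < ξ / ((i:ℝ)+1) := div_pos hξ0 hpos
          have h2' : (1:ℝ) ≤ (i:ℝ)+1 := by
            have : (0:ℝ) ≤ (i:ℝ) := Nat.cast_nonneg i
            linarith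
          intro hc; linarith
        simp [Measure.smul_apply, Measure.dirac_apply, hne]
      rw [tsum_congr this, tsum_zero]
    rw [h, h2] at h1
    simp only [one_div] at h1
    exact (ENNReal.inv_ne_zero.mpr ENNReal.ofNat_ne_top) h1.symm
end

section
/- Let E = ℕ ∪ {n + ξ/n : n ∈ ℕ} ⊆ ℝ with ξ ∈ (0, 1/2) and the Euclidean distance. Then for any two distinct points x, y ∈ E, |x − y| ≥ ξ / ((x ∨ y)), and consequently for any bounded function φ : E → ℝ and the one-step transition operator P₁ of the chain in the previous example, |P₁φ(x) − P₁φ(y)| ≤ 2|x − y| · ((|x−1| ∨ |y−1|) + 1)/ξ · ‖φ‖_∞ for all x, y ∈ E. -/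
open MeasureTheory
open scoped ENNReal

/-- The state space `E = ℕ ∪ {n + ξ/n : n ∈ ℕ}` (with `ℕ` starting at 1), as a subset of `ℝ`. -/
def shiftedState (ξ : ℝ) : Set ℝ :=
  {x | ∃ n : ℕ, 1 ≤ n ∧ (x = n ∨ x = (n : ℝ) + ξ / n)}

lemma shiftedState_one_le {ξ : ℝ} (hξ : 0 < ξ) {x : ℝ} (hx : x ∈ shiftedState ξ) : 1 ≤ x := by
  obtain ⟨n, hn, h | h⟩ := hx
  · subst h; exact_mod_cast hn
  · subst h
    have hn' : (1:ℝ) ≤ n := by exact_mod_cast hn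
    have : 0 < ξ / n := div_pos hξ (by linarith)
    linarith

lemma sep_lt {ξ : ℝ} (hξ : ξ ∈ Set.Ioo (0:ℝ) (1/2)) {x y : ℝ}
    (hx : x ∈ shiftedState ξ) (hy : y ∈ shiftedState ξ) (hlt : x < y) :
    ξ / y ≤ y - x := by
  obtain ⟨hξ0, hξh⟩ := hξ
  have hy1 : 1 ≤ y := shiftedState_one_le hξ0 hy
  have hξy : ξ / y ≤ ξ := div_le_self hξ0.le hy1
  obtain ⟨m, hm, hxm⟩ := hx
  obtain ⟨n, hn, hyn⟩ := hy
  have hm1 : (1:ℝ) ≤ m := by exact_mod_cast hm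
  have hn1 : (1:ℝ) ≤ n := by exact_mod_cast hn
  have hξm : ξ / m ≤ ξ := div_le_self hξ0.le hm1
  have hξn : ξ / n ≤ ξ := div_le_self hξ0.le hn1
  have hξm0 : 0 ≤ ξ / m := div_nonneg hξ0.le (by linarith)
  have hξn0 : 0 ≤ ξ / n := div_nonneg hξ0.le (by linarith)
  rcases hxm with hxm | hxm <;> rcases hyn with hyn | hyn <;> subst hxm <;> subst hyn
  · have h1 : m < n := by exact_mod_cast hlt
    have h2 : (m:ℝ) + 1 ≤ n := by exact_mod_cast h1
    linarith
  · have hmn : m ≤ n := by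
      by_contra h
      push_neg at h
      have : (n:ℝ) + 1 ≤ m := by exact_mod_cast h
      linarith
    have hmn' : (m:ℝ) ≤ n := by exact_mod_cast hmn
    have h2 : ξ / ((n:ℝ) + ξ / n) ≤ ξ / n := by
      apply div_le_div_of_nonneg_left hξ0.le (by linarith) (by linarith)
    linarith
  · have h1 : (m:ℝ) < n := by linarith
    have h1' : m < n := by exact_mod_cast h1
    have h2 : (m:ℝ) + 1 ≤ n := by exact_mod_cast h1'
    linarith
  · have h1 : m < n := by
      rcases lt_trichotomy m n with h | h | h
      · exact h
      · subst h; exact absurd hlt (lt_irrefl _)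
      · exfalso
        have : (n:ℝ) + 1 ≤ m := by exact_mod_cast h
        linarith
    have h2 : (m:ℝ) + 1 ≤ n := by exact_mod_cast h1
    linarith

lemma half_dirac_integral (φ : ℝ → ℝ) (a b : ℝ) :
    ∫ z, φ z ∂((1/2:ℝ≥0∞) • Measure.dirac a + (1/2:ℝ≥0∞) • Measure.dirac b)
      = (φ a + φ b) / 2 := by
  have hint : ∀ c : ℝ, Integrable φ (Measure.dirac c) := by
    intro c
    have hae : φ =ᵐ[Measure.dirac c] fun _ => φ c := by
      rw [MeasureTheory.ae_dirac_eq]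
      exact Filter.eventually_pure.2 rfl
    exact (integrable_congr hae).2 (integrable_const _)
  have h1 : Integrable φ ((1/2:ℝ≥0∞) • Measure.dirac a) :=
    (hint a).smul_measure (by norm_num)
  have h2 : Integrable φ ((1/2:ℝ≥0∞) • Measure.dirac b) :=
    (hint b).smul_measure (by norm_num)
  rw [integral_add_measure h1 h2, integral_smul_measure, integral_smul_measure,
    integral_dirac, integral_dirac]
  norm_num
  ring

theorem separation_and_gradient_bound_example
    (ξ : ℝ) (hξ : ξ ∈ Set.Ioo (0:ℝ) (1/2))
    (P : ℝ → Measure ℝ)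
    (hPprob : ∀ x, IsProbabilityMeasure (P x))
    (hPint : ∀ n : ℕ, 1 ≤ n →
      P n = (1/2 : ℝ≥0∞) • Measure.dirac (1 : ℝ)
            + (1/2 : ℝ≥0∞) • Measure.dirac ((n : ℝ) + 1))
    (hPshift : ∀ n : ℕ, 1 ≤ n →
      P ((n : ℝ) + ξ / n) = (1/2 : ℝ≥0∞) • Measure.dirac (1 + ξ)
            + (1/2 : ℝ≥0∞) • Measure.dirac (((n : ℝ) + 1) + ξ / ((n : ℝ) + 1)))
    (φ : ℝ → ℝ) (C : ℝ) (hC : ∀ z ∈ shiftedState ξ, |φ z| ≤ C)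
    (x y : ℝ) (hx : x ∈ shiftedState ξ) (hy : y ∈ shiftedState ξ) (hxy : x ≠ y) :
    ξ / max x y ≤ |x - y| ∧
    |(∫ z, φ z ∂(P x)) - ∫ z, φ z ∂(P y)|
      ≤ 2 * |x - y| * ((max |x - 1| |y - 1|) + 1) / ξ * C := by
  obtain ⟨hξ0, hξh⟩ := id hξ
  have hx1 : 1 ≤ x := shiftedState_one_le hξ0 hx
  have hy1 : 1 ≤ y := shiftedState_one_le hξ0 hy
  -- part 1
  have hsep : ξ / max x y ≤ |x - y| := by
    rcases lt_trichotomy x y with h | h | h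
    · rw [max_eq_right h.le, abs_sub_comm, abs_of_nonneg (by linarith)]
      exact sep_lt hξ hx hy h
    · exact absurd h hxy
    · rw [max_eq_left h.le, abs_of_nonneg (by linarith)]
      exact sep_lt hξ hy hx h
  refine ⟨hsep, ?_⟩
  -- C ≥ 0
  have hone : (1:ℝ) ∈ shiftedState ξ := ⟨1, le_refl 1, Or.inl (by norm_num)⟩
  have hC0 : 0 ≤ C := le_trans (abs_nonneg _) (hC 1 hone)
  -- each integral bounded by C
  have key : ∀ z ∈ shiftedState ξ, |∫ w, φ w ∂(P z)| ≤ C := by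
    intro z hz
    obtain ⟨n, hn, h | h⟩ := hz
    · subst h
      rw [hPint n hn, half_dirac_integral]
      have ha : |φ 1| ≤ C := hC 1 hone
      have hb : |φ ((n:ℝ) + 1)| ≤ C := by
        apply hC
        exact ⟨n + 1, le_trans hn (Nat.le_succ n), Or.inl (by push_cast; ring)⟩
      rw [abs_div]
      have := abs_add_le (φ 1) (φ ((n:ℝ)+1))
      rw [abs_of_nonneg (by norm_num : (0:ℝ) ≤ 2)]
      linarith
    · subst h
      rw [hPshift n hn, half_dirac_integral]
      have ha : |φ (1 + ξ)| ≤ C := by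
        apply hC
        exact ⟨1, le_refl 1, Or.inr (by norm_num)⟩
      have hb : |φ (((n:ℝ) + 1) + ξ / ((n:ℝ) + 1))| ≤ C := by
        apply hC
        exact ⟨n + 1, le_trans hn (Nat.le_succ n), Or.inr (by push_cast; ring_nf)⟩
      rw [abs_div]
      have := abs_add_le (φ (1 + ξ)) (φ (((n:ℝ)+1) + ξ / ((n:ℝ)+1)))
      rw [abs_of_nonneg (by norm_num : (0:ℝ) ≤ 2)]
      linarith
  have hIx := key x hx
  have hIy := key y hy
  have hdiff : |(∫ z, φ z ∂(P x)) - ∫ z, φ z ∂(P y)| ≤ 2 * C := by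
    calc |(∫ z, φ z ∂(P x)) - ∫ z, φ z ∂(P y)|
        ≤ |∫ z, φ z ∂(P x)| + |∫ z, φ z ∂(P y)| := abs_sub _ _
      _ ≤ 2 * C := by linarith
  -- rewrite max of abs
  have hmax : max |x - 1| |y - 1| + 1 = max x y := by
    rw [abs_of_nonneg (by linarith), abs_of_nonneg (by linarith)]
    rcases le_total x y with h | h
    · rw [max_eq_right (by linarith : x - 1 ≤ y - 1), max_eq_right h]; ring
    · rw [max_eq_left (by linarith : y - 1 ≤ x - 1), max_eq_left h]; ring
  rw [hmax]
  have hM1 : 1 ≤ max x y := le_trans hx1 (le_max_left x y)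
  have hξle : ξ ≤ |x - y| * max x y := by
    rw [div_le_iff₀ (by linarith : (0:ℝ) < max x y)] at hsep
    linarith
  have h2C : 2 * C ≤ 2 * |x - y| * max x y / ξ * C := by
    rw [div_mul_eq_mul_div, le_div_iff₀ hξ0]
    nlinarith
  linarith
end

section
/- Consider the discrete-time Markov kernel on E = [0,3] defined by P₁(x, ·) = Law(2 − √x + ζ) for x ∈ [0,1] and P₁(x, ·) = Law(2/3 + x/3 + ζ) for x ∈ [1,3], where ζ is uniform on [0, 1/3]. Then for the Lipschitz function φ(z) = z and every n ≥ 1 and y ∈ [0,1], |P_n φ(0) − P_n φ(y)| = 3^{−n+1} √y. Consequently, there is no constant C such that |P_n φ(0) − P_n φ(y)| ≤ C · y for all y ∈ (0,1], for any fixed n. -/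
open MeasureTheory
open scoped ENNReal

lemma integral_map_affine (b a c : ℝ) (f : ℝ → ℝ)
    (hf : ∀ w ∈ Set.Icc (1:ℝ) 3, f w = a + c * w)
    (hb : ∀ u ∈ Set.Icc (0:ℝ) (1/3), b + u ∈ Set.Icc (1:ℝ) 3) :
    ∫ z, f z ∂(Measure.map (fun u => b + u)
        ((3 : ℝ≥0∞) • MeasureTheory.volume.restrict (Set.Icc (0:ℝ) (1/3))))
      = a + c * (b + 1/6) := by
  set μ : Measure ℝ := (3 : ℝ≥0∞) • MeasureTheory.volume.restrict (Set.Icc (0:ℝ) (1/3)) with hμ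
  have hg : Measurable (fun u : ℝ => b + u) := measurable_const.add measurable_id
  have hae : ∀ᵐ w ∂(Measure.map (fun u => b + u) μ), w ∈ Set.Icc (1:ℝ) 3 := by
    refine (MeasureTheory.ae_map_iff hg.aemeasurable measurableSet_Icc).2 ?_
    refine Measure.ae_smul_measure ?_ 3
    exact (ae_restrict_iff' measurableSet_Icc).2 (Filter.Eventually.of_forall hb)
  have h1 : ∫ z, f z ∂(Measure.map (fun u => b + u) μ)
      = ∫ z, (a + c * z) ∂(Measure.map (fun u => b + u) μ) := by
    refine integral_congr_ae ?_
    filter_upwards [hae] with w hw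
    exact hf w hw
  rw [h1, integral_map (f := fun z : ℝ => a + c * z) hg.aemeasurable
    ((continuous_const.add (continuous_const.mul continuous_id') : Continuous (fun z : ℝ => a + c * z)).aestronglyMeasurable)]
  rw [hμ, MeasureTheory.integral_smul_measure]
  have hIcc : ∫ u in Set.Icc (0:ℝ) (1/3), (a + c * (b + u))
      = ∫ u in (0:ℝ)..(1/3), (a + c * (b + u)) := by
    rw [MeasureTheory.integral_Icc_eq_integral_Ioc,
      intervalIntegral.integral_of_le (by norm_num : (0:ℝ) ≤ 1/3)]
  have hval : ∫ u in (0:ℝ)..(1/3), (a + c * (b + u)) = (a + c*b)/3 + c/18 := by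
    have h : ∀ u : ℝ, a + c * (b + u) = (a + c*b) + c * u := fun u => by ring
    simp_rw [h]
    rw [intervalIntegral.integral_add (g := fun u : ℝ => c * u) intervalIntegrable_const
      ((continuous_const.mul continuous_id').intervalIntegrable _ _),
      intervalIntegral.integral_const, intervalIntegral.integral_const_mul, integral_id]
    norm_num
    ring
  simp only [hIcc, hval]
  simp
  ring

/-- The one-step transition operator `φ ↦ (x ↦ ∫ φ dK(x,·))` of a kernel `K`. -/
noncomputable def stepOp (K : ℝ → Measure ℝ) (φ : ℝ → ℝ) (x : ℝ) : ℝ :=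
  ∫ z, φ z ∂(K x)

theorem strong_feller_not_ASFplus_example
    (K : ℝ → Measure ℝ)
    (h1 : ∀ x ∈ Set.Icc (0:ℝ) 1,
      K x = Measure.map (fun u => 2 - Real.sqrt x + u)
              ((3 : ℝ≥0∞) • MeasureTheory.volume.restrict (Set.Icc (0:ℝ) (1/3))))
    (h2 : ∀ x ∈ Set.Icc (1:ℝ) 3,
      K x = Measure.map (fun u => 2/3 + x/3 + u)
              ((3 : ℝ≥0∞) • MeasureTheory.volume.restrict (Set.Icc (0:ℝ) (1/3)))) :
    (∀ n : ℕ, 1 ≤ n → ∀ y ∈ Set.Icc (0:ℝ) 1,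
      |(stepOp K)^[n] id 0 - (stepOp K)^[n] id y| = 3 * Real.sqrt y / 3 ^ n) ∧
    (∀ n : ℕ, 1 ≤ n →
      ¬ ∃ C : ℝ, ∀ y ∈ Set.Ioc (0:ℝ) 1,
        |(stepOp K)^[n] id 0 - (stepOp K)^[n] id y| ≤ C * y) := by
  -- value of iterates on [1,3]
  have key : ∀ m : ℕ, ∀ z ∈ Set.Icc (1:ℝ) 3,
      (stepOp K)^[m] id z = (5/4 - 5/4/3^m) + (1/3^m) * z := by
    intro m
    induction m with
    | zero => intro z hz; simp
    | succ m ih =>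
      intro z hz
      rw [Function.iterate_succ_apply']
      show ∫ w, (stepOp K)^[m] id w ∂(K z) = _
      rw [h2 z hz]
      have hb : ∀ u ∈ Set.Icc (0:ℝ) (1/3), 2/3 + z/3 + u ∈ Set.Icc (1:ℝ) 3 := by
        intro u hu
        obtain ⟨hu0, hu1⟩ := hu
        obtain ⟨hz1, hz3⟩ := hz
        simp only [Set.mem_Icc]
        exact ⟨by linarith, by linarith⟩
      rw [integral_map_affine (2/3 + z/3) (5/4 - 5/4/3^m) (1/3^m) _ ih hb]
      have h3 : (3:ℝ)^m ≠ 0 := by positivity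
      have h3' : (3:ℝ)^(m+1) = 3^m * 3 := pow_succ 3 m
      field_simp [h3']
      ring
  -- value of iterates on [0,1]
  have val : ∀ m : ℕ, ∀ y ∈ Set.Icc (0:ℝ) 1,
      (stepOp K)^[m+1] id y
        = (5/4 - 5/4/3^m) + (1/3^m) * (2 - Real.sqrt y + 1/6) := by
    intro m y hy
    rw [Function.iterate_succ_apply']
    show ∫ w, (stepOp K)^[m] id w ∂(K y) = _
    rw [h1 y hy]
    have hs0 : 0 ≤ Real.sqrt y := Real.sqrt_nonneg y
    have hs1 : Real.sqrt y ≤ 1 := Real.sqrt_le_one.mpr hy.2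
    have hb : ∀ u ∈ Set.Icc (0:ℝ) (1/3), 2 - Real.sqrt y + u ∈ Set.Icc (1:ℝ) 3 := by
      intro u hu
      obtain ⟨hu0, hu1⟩ := hu
      simp only [Set.mem_Icc]
      exact ⟨by linarith, by linarith⟩
    rw [integral_map_affine (2 - Real.sqrt y) (5/4 - 5/4/3^m) (1/3^m) _ (key m) hb]
  have part1 : ∀ n : ℕ, 1 ≤ n → ∀ y ∈ Set.Icc (0:ℝ) 1,
      |(stepOp K)^[n] id 0 - (stepOp K)^[n] id y| = 3 * Real.sqrt y / 3 ^ n := by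
    intro n hn y hy
    obtain ⟨m, rfl⟩ : ∃ m, n = m + 1 := ⟨n - 1, by omega⟩
    have hd : (stepOp K)^[m+1] id 0 - (stepOp K)^[m+1] id y = Real.sqrt y / 3^m := by
      rw [val m 0 (by norm_num), val m y hy, Real.sqrt_zero]
      ring
    rw [hd, abs_of_nonneg (by positivity)]
    have h3' : (3:ℝ)^(m+1) = 3^m * 3 := pow_succ 3 m
    have h3 : (3:ℝ)^m ≠ 0 := by positivity
    field_simp [h3']
    ring
  refine ⟨part1, ?_⟩
  rintro n hn ⟨C, hC⟩
  set t : ℝ := min 1 (1/((|C|+1)*3^n)) with ht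
  have hp : (0:ℝ) < 3^n := by positivity
  have hC1 : (0:ℝ) < (|C|+1)*3^n := by positivity
  have ht0 : 0 < t := lt_min one_pos (by positivity)
  have ht1 : t ≤ 1 := min_le_left _ _
  have htle : t * ((|C|+1) * 3^n) ≤ 1 := by
    have := min_le_right (1:ℝ) (1/((|C|+1)*3^n))
    rw [le_div_iff₀ hC1] at this
    exact this
  have hy : t^2 ∈ Set.Ioc (0:ℝ) 1 := ⟨by positivity, by nlinarith⟩
  have hy' : t^2 ∈ Set.Icc (0:ℝ) 1 := ⟨le_of_lt hy.1, hy.2⟩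
  have heq := part1 n hn (t^2) hy'
  have hle := hC (t^2) hy
  rw [heq, Real.sqrt_sq ht0.le] at hle
  rw [div_le_iff₀ hp] at hle
  have habs : C ≤ |C| := le_abs_self C
  nlinarith [mul_pos ht0 hp, abs_nonneg C, mul_le_mul_of_nonneg_right habs
    (by positivity : (0:ℝ) ≤ t^2 * 3^n), mul_le_mul_of_nonneg_left htle
    (mul_nonneg (abs_nonneg C) ht0.le)]
end
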